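/- Let f ∈ ℤ[x] be an irreducible polynomial with leading coefficient a, and let C : y² = f(x). For every squarefree integer d and all rational numbers x, y with y ≠ 0 such that (x, √d·y) lies on C, one has H(√d·y) ≥ |d|^{3/8} · |a|^{-1/2}; equivalently, log H(√d·y) ≥ (3/8) log|d| − (1/2) log|a|. -/

import Mathlib

open Polynomial

lemma keylem (d c3 c2 c1 c0 X0 X1 Y0 Y1 p : ℤ)
    (hd : Squarefree d) (hp : Prime p)
    (hxcop : IsCoprime X0 X1) (hycop : IsCoprime Y0 Y1)
    (heq : d * Y0^2 * X1^3 = Y1^2 * (c3 * X0^3 + c2 * X0^2 * X1 + c1 * X0 * X1^2 + c0 * X1^3))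
    (hpd : p ∣ d) (hpY1 : p ∣ Y1) (hpa : ¬ p ∣ c3) :
    p^2 ∣ Y1 := by
  have hpY0 : ¬ p ∣ Y0 := fun h => hp.not_unit (hycop.isUnit_of_dvd' h hpY1)
  have hpX1 : p ∣ X1 := by
    by_contra hpx
    have h2 : p^2 ∣ d * (Y0^2 * X1^3) := by
      rw [show d * (Y0^2 * X1^3) = d * Y0^2 * X1^3 by ring, heq]
      exact dvd_mul_of_dvd_left (pow_dvd_pow_of_dvd hpY1 2) _
    have hcop : IsCoprime (p^2) (Y0^2 * X1^3) := by
      have h1 : IsCoprime p Y0 := (hp.coprime_iff_not_dvd).2 hpY0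
      have hx : IsCoprime p X1 := (hp.coprime_iff_not_dvd).2 hpx
      exact ((h1.pow_right.mul_right hx.pow_right)).pow_left
    have hpd2 : p^2 ∣ d := hcop.dvd_of_dvd_mul_right h2
    exact hp.not_unit (hd p (by rwa [← sq]))
  have hpX0 : ¬ p ∣ X0 := fun h => hp.not_unit (hxcop.isUnit_of_dvd' h hpX1)
  set F := c3 * X0^3 + c2 * X0^2 * X1 + c1 * X0 * X1^2 + c0 * X1^3 with hF
  have hpF : ¬ p ∣ F := by
    intro h
    have hrest : p ∣ c2 * X0^2 * X1 + c1 * X0 * X1^2 + c0 * X1^3 :=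
      dvd_add (dvd_add (dvd_mul_of_dvd_right hpX1 _)
        (dvd_mul_of_dvd_right (dvd_pow hpX1 two_ne_zero) _))
        (dvd_mul_of_dvd_right (dvd_pow hpX1 three_ne_zero) _)
    have h3 : p ∣ c3 * X0^3 := by
      have h4 := dvd_sub h hrest
      rwa [hF, show c3 * X0^3 + c2 * X0^2 * X1 + c1 * X0 * X1^2 + c0 * X1^3
        - (c2 * X0^2 * X1 + c1 * X0 * X1^2 + c0 * X1^3) = c3 * X0^3 by ring] at h4
    rcases hp.dvd_mul.mp h3 with h | h
    · exact hpa h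
    · exact hpX0 (hp.dvd_of_dvd_pow h)
  have h3 : p^3 ∣ Y1^2 * F := by
    rw [← heq, show d * Y0^2 * X1^3 = (d * Y0^2) * X1^3 by ring]
    exact dvd_mul_of_dvd_right (pow_dvd_pow_of_dvd hpX1 3) _
  have h4 : p^3 ∣ Y1^2 :=
    (((hp.coprime_iff_not_dvd).2 hpF).pow_left).dvd_of_dvd_mul_right h3
  rcases eq_or_ne Y1 0 with h0 | h0
  · simp [h0]
  have hq : Nat.Prime p.natAbs := Int.prime_iff_natAbs_prime.mp hp
  have h5 : p.natAbs ^ 3 ∣ Y1.natAbs ^ 2 := by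
    have := Int.natAbs_dvd_natAbs.mpr h4
    simpa [Int.natAbs_pow] using this
  have h6 : 3 ≤ (Y1.natAbs ^ 2).factorization p.natAbs :=
    (hq.pow_dvd_iff_le_factorization (by positivity)).mp h5
  rw [Nat.factorization_pow] at h6
  have h7 : 2 ≤ Y1.natAbs.factorization p.natAbs := by
    simp only [Finsupp.smul_apply, smul_eq_mul] at h6; omega
  have h8 : p.natAbs ^ 2 ∣ Y1.natAbs :=
    (hq.pow_dvd_iff_le_factorization (by simpa using h0)).mpr h7
  rw [← Int.natAbs_dvd_natAbs, Int.natAbs_pow]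
  exact h8

lemma gbound (G A Y : ℕ) (hG : Squarefree G) (hA : A ≠ 0) (hY : Y ≠ 0)
    (hkey : ∀ p : ℕ, p.Prime → p ∣ G → ¬ p ∣ A → p ^ 2 ∣ Y) : G ^ 2 ≤ A ^ 2 * Y := by
  have hG0 : G ≠ 0 := hG.ne_zero
  set g1 := Nat.gcd G A with hg1def
  have hg1G : g1 ∣ G := Nat.gcd_dvd_left G A
  set g2 := G / g1 with hg2def
  have hsplit : G = g1 * g2 := (Nat.mul_div_cancel' hg1G).symm
  have hg20 : g2 ≠ 0 := fun h => hG0 (by rw [hsplit, h, mul_zero])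
  have hg2sf : Squarefree g2 := hG.squarefree_of_dvd ⟨g1, by rw [hsplit]; ring⟩
  have hg2Y : g2 ^ 2 ∣ Y := by
    rw [← Nat.factorization_le_iff_dvd (pow_ne_zero _ hg20) hY]
    intro p
    by_cases hp : p.Prime
    · rw [Nat.factorization_pow]
      simp only [Finsupp.smul_apply, smul_eq_mul]
      by_cases hf : g2.factorization p = 0
      · simp [hf]
      have hf1 : g2.factorization p = 1 :=
        le_antisymm (hg2sf.natFactorization_le_one p) (Nat.one_le_iff_ne_zero.2 hf)
      have hpg2 : p ∣ g2 := Nat.dvd_of_factorization_pos hf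
      have hpG : p ∣ G := hpg2.trans ⟨g1, by rw [hsplit]; ring⟩
      have hpA : ¬ p ∣ A := by
        intro pA
        have hpg1 : p ∣ g1 := Nat.dvd_gcd hpG pA
        have : p * p ∣ G := by rw [hsplit]; exact mul_dvd_mul hpg1 hpg2
        exact hp.one_lt.ne' (Nat.isUnit_iff.mp (hG p this))
      have := hkey p hp hpG hpA
      rw [hf1]
      exact (hp.pow_dvd_iff_le_factorization hY).mp this
    · simp [Nat.factorization_eq_zero_of_not_prime _ hp]
  calc G ^ 2 = g1 ^ 2 * g2 ^ 2 := by rw [hsplit]; ring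
    _ ≤ A ^ 2 * Y := Nat.mul_le_mul
        (Nat.pow_le_pow_left (Nat.le_of_dvd (Nat.pos_of_ne_zero hA) (Nat.gcd_dvd_right G A)) 2)
        (Nat.le_of_dvd (Nat.pos_of_ne_zero hY) hg2Y)

theorem stmt10 (f : Polynomial ℤ) (hdeg : f.natDegree = 3)
    (hirr : Irreducible (f.map (Int.castRingHom ℚ)))
    (d : ℤ) (hd : Squarefree d)
    (x y : ℚ) (hy : y ≠ 0)
    (hcurve : (d : ℚ) * y ^ 2 = Polynomial.aeval x (f.map (Int.castRingHom ℚ))) :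
    ((|d| : ℝ)) ^ ((3 : ℝ) / 8) * ((|f.leadingCoeff| : ℝ)) ^ (-(1 : ℝ) / 2)
      ≤ max ((|y.num| : ℝ) * Real.sqrt |(d : ℝ)|) ((y.den : ℝ))
          / Real.sqrt (Int.gcd d ((y.den : ℤ) ^ 2)) := by
  have hf0 : f ≠ 0 := fun h => by simp [h] at hdeg
  have hlc : f.leadingCoeff = f.coeff 3 := by rw [Polynomial.leadingCoeff, hdeg]
  have ha0 : f.coeff 3 ≠ 0 := by rw [← hlc]; exact Polynomial.leadingCoeff_ne_zero.mpr hf0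
  have hd0 : d ≠ 0 := hd.ne_zero
  -- the integer equation
  have hc2 : (d:ℚ) * y^2 = (f.coeff 3 : ℚ) * x^3 + (f.coeff 2 : ℚ) * x^2
      + (f.coeff 1 : ℚ) * x + (f.coeff 0 : ℚ) := by
    rw [hcurve, show Int.castRingHom ℚ = algebraMap ℤ ℚ from rfl,
      Polynomial.aeval_map_algebraMap, Polynomial.aeval_eq_sum_range, hdeg]
    simp [Finset.sum_range_succ, zsmul_eq_mul]
    ring
  have hXne : ((x.den:ℚ)) ≠ 0 := (Nat.cast_ne_zero (R := ℚ)).2 x.den_nz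
  have hYne : ((y.den:ℚ)) ≠ 0 := (Nat.cast_ne_zero (R := ℚ)).2 y.den_nz
  have hx1 : (x.num:ℚ) = x * (x.den:ℚ) := (div_eq_iff hXne).mp (Rat.num_div_den x)
  have hy1 : (y.num:ℚ) = y * (y.den:ℚ) := (div_eq_iff hYne).mp (Rat.num_div_den y)
  have heqZ : d * y.num^2 * (x.den:ℤ)^3 = (y.den:ℤ)^2 *
      (f.coeff 3 * x.num^3 + f.coeff 2 * x.num^2 * (x.den:ℤ)
        + f.coeff 1 * x.num * (x.den:ℤ)^2 + f.coeff 0 * (x.den:ℤ)^3) := by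
    have : ((d * y.num^2 * (x.den:ℤ)^3 : ℤ) : ℚ) = (((y.den:ℤ)^2 *
      (f.coeff 3 * x.num^3 + f.coeff 2 * x.num^2 * (x.den:ℤ)
        + f.coeff 1 * x.num * (x.den:ℤ)^2 + f.coeff 0 * (x.den:ℤ)^3) : ℤ) : ℚ) := by
      push_cast
      rw [hx1, hy1]
      linear_combination ((y.den:ℚ)^2 * (x.den:ℚ)^3) * hc2
    exact_mod_cast this
  -- coprimality
  have hxcop : IsCoprime x.num ((x.den:ℤ)) := by
    rw [Int.isCoprime_iff_gcd_eq_one]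
    simpa [Int.gcd] using x.reduced
  have hycop : IsCoprime y.num ((y.den:ℤ)) := by
    rw [Int.isCoprime_iff_gcd_eq_one]
    simpa [Int.gcd] using y.reduced
  -- the gcd bound
  set G : ℕ := Int.gcd d ((y.den:ℤ)^2) with hGdef
  set A : ℕ := (f.coeff 3).natAbs with hAdef
  have hGd : (G:ℤ) ∣ d := Int.gcd_dvd_left _ _
  have hGsf : Squarefree G := Int.squarefree_natCast.mp (hd.squarefree_of_dvd hGd)
  have hA0 : A ≠ 0 := Int.natAbs_ne_zero.mpr ha0
  have hY0 : y.den ≠ 0 := y.den_nz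
  have hkeyn : ∀ p : ℕ, p.Prime → p ∣ G → ¬ p ∣ A → p ^ 2 ∣ y.den := by
    intro p hp hpG hpA
    have hpZ : Prime (p:ℤ) := Int.prime_iff_natAbs_prime.mpr (by simpa using hp)
    have hpd : (p:ℤ) ∣ d := (Int.natCast_dvd_natCast.mpr hpG).trans hGd
    have hpy2 : (p:ℤ) ∣ (y.den:ℤ)^2 :=
      (Int.natCast_dvd_natCast.mpr hpG).trans (Int.gcd_dvd_right _ _)
    have hpy : (p:ℤ) ∣ (y.den:ℤ) := hpZ.dvd_of_dvd_pow hpy2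
    have hpa : ¬ (p:ℤ) ∣ f.coeff 3 := fun h => hpA (Int.natCast_dvd.mp h)
    have := keylem d (f.coeff 3) (f.coeff 2) (f.coeff 1) (f.coeff 0)
      x.num (x.den:ℤ) y.num (y.den:ℤ) (p:ℤ) hd hpZ hxcop hycop heqZ hpd hpy hpa
    exact_mod_cast this
  have hGA : G ^ 2 ≤ A ^ 2 * y.den := gbound G A y.den hGsf hA0 hY0 hkeyn
  -- real estimates
  have hG0 : G ≠ 0 := by
    intro h
    exact (pow_ne_zero 2 (Int.natCast_ne_zero.mpr hY0)) (Int.gcd_eq_zero_iff.mp h).2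
  simp only [← Int.cast_abs]
  have hGr1 : (1:ℝ) ≤ (G:ℝ) := by exact_mod_cast Nat.one_le_iff_ne_zero.mpr hG0
  set Dr : ℝ := ((|d| : ℤ) : ℝ) with hDrdef
  set Ar : ℝ := ((|f.leadingCoeff| : ℤ) : ℝ) with hArdef
  have hDr1 : (1:ℝ) ≤ Dr := by
    rw [hDrdef]; exact_mod_cast Int.one_le_abs hd0
  have hAr1 : (1:ℝ) ≤ Ar := by
    rw [hArdef]; exact_mod_cast Int.one_le_abs (Polynomial.leadingCoeff_ne_zero.mpr hf0)
  have hDr0 : (0:ℝ) ≤ Dr := le_trans zero_le_one hDr1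
  have hAr0 : (0:ℝ) < Ar := lt_of_lt_of_le zero_lt_one hAr1
  set M : ℝ := max (((|y.num| : ℤ) : ℝ) * Real.sqrt Dr) ((y.den : ℝ)) with hMdef
  have hYd1 : (1:ℝ) ≤ (y.den:ℝ) := Nat.one_le_cast.mpr y.pos
  have hM0 : (0:ℝ) ≤ M := le_trans zero_le_one (le_trans hYd1 (le_max_right _ _))
  have hN1 : (1:ℝ) ≤ ((|y.num| : ℤ):ℝ) := by
    exact_mod_cast Int.one_le_abs (Rat.num_ne_zero.mpr hy)
  have hsqrtG : (0:ℝ) < Real.sqrt G := Real.sqrt_pos.mpr (lt_of_lt_of_le zero_lt_one hGr1)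
  rw [le_div_iff₀ hsqrtG]
  apply le_of_pow_le_pow_left₀ (n := 8) (by norm_num) hM0
  have e1 : (Dr ^ ((3:ℝ)/8)) ^ (8:ℕ) = Dr ^ (3:ℕ) := by
    rw [← Real.rpow_natCast (Dr ^ ((3:ℝ)/8)) 8, ← Real.rpow_mul hDr0, ← Real.rpow_natCast Dr 3]
    norm_num
  have e2 : (Ar ^ (-(1:ℝ)/2)) ^ (8:ℕ) = (Ar ^ (4:ℕ))⁻¹ := by
    rw [← Real.rpow_natCast (Ar ^ (-(1:ℝ)/2)) 8, ← Real.rpow_mul hAr0.le,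
      show (-(1:ℝ)/2) * (8:ℕ) = -(4:ℕ) by norm_num, Real.rpow_neg hAr0.le,
      Real.rpow_natCast]
  have e3 : (Real.sqrt G) ^ (8:ℕ) = (G:ℝ) ^ (4:ℕ) := by
    rw [show (8:ℕ) = 2 * 4 by norm_num, pow_mul, Real.sq_sqrt (by positivity)]
  have hLHS : (Dr ^ ((3:ℝ)/8) * Ar ^ (-(1:ℝ)/2) * Real.sqrt G) ^ (8:ℕ)
      = Dr ^ (3:ℕ) * (Ar ^ (4:ℕ))⁻¹ * (G:ℝ) ^ (4:ℕ) := by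
    rw [mul_pow, mul_pow, e1, e2, e3]
  rw [hLHS]
  -- cast of gcd bound
  have hGA' : (G:ℝ) ^ 2 ≤ ((A:ℕ):ℝ) ^ 2 * (y.den:ℝ) := by exact_mod_cast hGA
  have hAeq : ((A:ℕ):ℝ) = Ar := by
    rw [hArdef, hlc, Int.abs_eq_natAbs, Int.cast_natCast, hAdef]
  rw [hAeq] at hGA'
  have hG4 : (G:ℝ) ^ (4:ℕ) ≤ Ar ^ 4 * (y.den:ℝ)^2 := by
    calc (G:ℝ)^(4:ℕ) = ((G:ℝ)^2)^2 := by ring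
      _ ≤ (Ar^2 * (y.den:ℝ))^2 := by
          apply pow_le_pow_left₀ (by positivity) hGA'
      _ = Ar ^ 4 * (y.den:ℝ)^2 := by ring
  have step1 : Dr ^ (3:ℕ) * (Ar ^ (4:ℕ))⁻¹ * (G:ℝ) ^ (4:ℕ)
      ≤ Dr ^ 3 * (y.den:ℝ)^2 := by
    have h := mul_le_mul_of_nonneg_left hG4 (by positivity : (0:ℝ) ≤ Dr ^ (3:ℕ) * (Ar ^ (4:ℕ))⁻¹)
    calc Dr ^ (3:ℕ) * (Ar ^ (4:ℕ))⁻¹ * (G:ℝ) ^ (4:ℕ)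
        = Dr ^ (3:ℕ) * (Ar ^ (4:ℕ))⁻¹ * ((G:ℝ) ^ (4:ℕ)) := by ring
      _ ≤ Dr ^ (3:ℕ) * (Ar ^ (4:ℕ))⁻¹ * (Ar ^ 4 * (y.den:ℝ)^2) := h
      _ = Dr ^ 3 * (y.den:ℝ)^2 * (Ar^4 * (Ar ^ (4:ℕ))⁻¹) := by ring
      _ = Dr ^ 3 * (y.den:ℝ)^2 := by
          rw [mul_inv_cancel₀ (by positivity : (Ar:ℝ)^(4:ℕ) ≠ 0), mul_one]
  refine le_trans step1 ?_
  -- finally D^3 * yden^2 ≤ M^8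
  have hMs : Real.sqrt Dr ≤ M := by
    calc Real.sqrt Dr = 1 * Real.sqrt Dr := (one_mul _).symm
      _ ≤ ((|y.num| : ℤ):ℝ) * Real.sqrt Dr := by
          apply mul_le_mul_of_nonneg_right hN1 (Real.sqrt_nonneg _)
      _ ≤ M := le_max_left _ _
  have hMy : (y.den:ℝ) ≤ M := le_max_right _ _
  calc Dr ^ 3 * (y.den:ℝ)^2 = (Real.sqrt Dr)^6 * (y.den:ℝ)^2 := by
        rw [show (6:ℕ) = 2*3 by norm_num, pow_mul, Real.sq_sqrt hDr0]
    _ ≤ M^6 * M^2 := by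
        apply mul_le_mul (pow_le_pow_left₀ (Real.sqrt_nonneg _) hMs 6)
          (pow_le_pow_left₀ (by positivity) hMy 2) (by positivity) (by positivity)
    _ = M ^ 8 := by ring
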